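/- Let L_{∇f}, L_{∇g} > 0, w ≥ 0, Z > 0 and λ < η be real numbers, and define s = (1/(2 L_{∇g})) (√(w² + (L_{∇g}/L_{∇f}) (η − λ)² Z²) − w) and, for ε̄ ≥ 0, φ(α) = 2 w ε̄ + 2 L_{∇g} ε̄² + (α² L_{∇f}/2 + (λ − η) α) Z². Then for every ε̄ ∈ [0, s): the quantity (η − λ)² − 4 L_{∇f} (w ε̄ + L_{∇g} ε̄²)/Z² is strictly positive, so ŝ = √((η − λ)² − 4 L_{∇f} (w ε̄ + L_{∇g} ε̄²)/Z²) > 0; setting α̲ = (η − λ − ŝ)/L_{∇f} and ᾱ = (η − λ + ŝ)/L_{∇f}, one has 0 ≤ α̲ < ᾱ and φ(α) ≤ 0 for all α ∈ [α̲, ᾱ]. -/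

import Mathlib

set_option maxHeartbeats 800000


theorem step_size_interval_exists
    (Lf Lg w Z lam η : ℝ) (hLf : 0 < Lf) (hLg : 0 < Lg) (hw : 0 ≤ w)
    (hZ : 0 < Z) (hlη : lam < η) :
    ∀ ebar : ℝ, 0 ≤ ebar →
      ebar < (1 / (2 * Lg)) *
        (Real.sqrt (w ^ 2 + (Lg / Lf) * (η - lam) ^ 2 * Z ^ 2) - w) →
      0 < (η - lam) ^ 2 - 4 * Lf * (w * ebar + Lg * ebar ^ 2) / Z ^ 2 ∧
      0 < Real.sqrt ((η - lam) ^ 2 - 4 * Lf * (w * ebar + Lg * ebar ^ 2) / Z ^ 2) ∧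
      0 ≤ (η - lam
          - Real.sqrt ((η - lam) ^ 2 - 4 * Lf * (w * ebar + Lg * ebar ^ 2) / Z ^ 2)) / Lf ∧
      (η - lam
          - Real.sqrt ((η - lam) ^ 2 - 4 * Lf * (w * ebar + Lg * ebar ^ 2) / Z ^ 2)) / Lf
        < (η - lam
          + Real.sqrt ((η - lam) ^ 2 - 4 * Lf * (w * ebar + Lg * ebar ^ 2) / Z ^ 2)) / Lf ∧
      ∀ α : ℝ,
        (η - lam
          - Real.sqrt ((η - lam) ^ 2 - 4 * Lf * (w * ebar + Lg * ebar ^ 2) / Z ^ 2)) / Lf ≤ α →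
        α ≤ (η - lam
          + Real.sqrt ((η - lam) ^ 2 - 4 * Lf * (w * ebar + Lg * ebar ^ 2) / Z ^ 2)) / Lf →
        2 * w * ebar + 2 * Lg * ebar ^ 2
          + (α ^ 2 * Lf / 2 + (lam - η) * α) * Z ^ 2 ≤ 0 := by
  intro e he hlt
  set A := w ^ 2 + (Lg / Lf) * (η - lam) ^ 2 * Z ^ 2 with hA
  have hApos : 0 ≤ A := by positivity
  have hS0 : Real.sqrt A ^ 2 = A := Real.sq_sqrt hApos
  have hlt' : 2 * Lg * e + w < Real.sqrt A := by
    have := (lt_div_iff₀' (by positivity : (0:ℝ) < 2 * Lg)).mp (by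
      simpa [one_div, div_eq_inv_mul] using hlt)
    linarith
  have hsq : (2 * Lg * e + w) ^ 2 < A := by
    have h1 : 0 ≤ 2 * Lg * e + w := by positivity
    nlinarith [hS0, hlt']
  have hsq' : (2 * Lg * e + w) ^ 2 < w ^ 2 + (Lg / Lf) * (η - lam) ^ 2 * Z ^ 2 := by
    rw [← hA]; exact hsq
  -- key : 4 Lf (w e + Lg e²) < (η-lam)² Z²
  have hkey : 4 * Lf * (w * e + Lg * e ^ 2) < (η - lam) ^ 2 * Z ^ 2 := by
    have hA' : 4 * Lg * (Lg * e ^ 2 + w * e) < (Lg / Lf) * (η - lam) ^ 2 * Z ^ 2 := by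
      nlinarith [hsq']
    have : (Lg / Lf) * (η - lam) ^ 2 * Z ^ 2 * Lf = Lg * ((η - lam) ^ 2 * Z ^ 2) := by
      field_simp
    nlinarith [hA', mul_pos hLg hLf]
  set d := 4 * Lf * (w * e + Lg * e ^ 2) / Z ^ 2 with hd
  have hdZ : d * Z ^ 2 = 4 * Lf * (w * e + Lg * e ^ 2) := by
    rw [hd, div_mul_cancel₀ _ (by positivity)]
  have hdnn : 0 ≤ d := by positivity
  have hD : 0 < (η - lam) ^ 2 - d := by
    nlinarith [hkey, sq_nonneg Z]
  set s := Real.sqrt ((η - lam) ^ 2 - d) with hs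
  have hs2 : s ^ 2 = (η - lam) ^ 2 - d := Real.sq_sqrt hD.le
  have hspos : 0 < s := Real.sqrt_pos.mpr hD
  have hsle : s ≤ η - lam := by
    have : (η - lam) ^ 2 - d ≤ (η - lam) ^ 2 := by linarith
    calc s ≤ Real.sqrt ((η - lam) ^ 2) := Real.sqrt_le_sqrt this
      _ = η - lam := Real.sqrt_sq (by linarith)
  refine ⟨hD, hspos, div_nonneg (by linarith) hLf.le,
    (div_lt_div_iff_of_pos_right hLf).mpr (by linarith), ?_⟩
  intro α h1 h2
  have hb1 : η - lam - s ≤ α * Lf := (div_le_iff₀ hLf).mp h1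
  have hb2 : α * Lf ≤ η - lam + s := (le_div_iff₀ hLf).mp h2
  have hq : 0 ≤ (α * Lf - (η - lam - s)) * ((η - lam + s) - α * Lf) :=
    mul_nonneg (by linarith) (by linarith)
  have key2 : (α * Lf - (η - lam)) ^ 2 ≤ (η - lam) ^ 2 - d := by nlinarith [hq, hs2]
  nlinarith [mul_le_mul_of_nonneg_right key2 (sq_nonneg Z), hdZ, hLf]
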